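/- arXiv:0704.1327 — 2 statements merged into one kernel-verified Lean document; each statement's English description precedes it below -/
import Mathlib

section
/- Let n = p_1^{e_1} ⋯ p_k^{e_k} be the prime factorization of a positive integer n > 1 with p_1 < p_2 < ⋯ < p_k, and let z ≥ 1 be a real number. Then Δ_0(n) ≤ z if and only if for each i with 1 ≤ i ≤ k, the inequality p_i ≤ z · ∏_{j < i} p_j^{e_j} holds (where the empty product for i = 1 equals 1). -/
set_option linter.unusedSectionVars false


/-- `Δ₀(n)`: the maximum of the ratios `d_{i+1}/d_i` of consecutive divisors of `n`
(sorted increasingly), with `Δ₀(1) = 1`. -/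
noncomputable def Delta0 (n : ℕ) : ℝ :=
  let l := n.divisors.sort (· ≤ ·)
  (l.zip l.tail).foldr (fun q r => max ((q.2 : ℝ) / (q.1 : ℝ)) r) 1

lemma foldr_max_le_iff (L : List (ℕ × ℕ)) (z : ℝ) :
    (L.foldr (fun q r => max ((q.2 : ℝ) / (q.1 : ℝ)) r) 1 ≤ z) ↔
      (1 ≤ z ∧ ∀ q ∈ L, (q.2 : ℝ) / (q.1 : ℝ) ≤ z) := by
  induction L with
  | nil => simp
  | cons a t ih => simp [ih]; tauto

lemma zip_tail_chain' {α : Type*} (R : α → α → Prop) :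
    ∀ (l : List α), (∀ q ∈ l.zip l.tail, R q.1 q.2) ↔ l.IsChain R
  | [] => by simp
  | [a] => by simp
  | a :: b :: t => by
    rw [List.isChain_cons_cons, ← zip_tail_chain' R (b :: t)]
    simp only [List.tail_cons, List.zip_cons_cons, List.mem_cons]
    constructor
    · intro h; exact ⟨h _ (Or.inl rfl), fun q hq => h q (Or.inr hq)⟩
    · rintro ⟨h1, h2⟩ q (rfl | hq); exact h1; exact h2 q hq

lemma delta0_le_iff_dense (n : ℕ) (hn : 0 < n) (z : ℝ) (hz : 1 ≤ z) :
    Delta0 n ≤ z ↔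
      ∀ d : ℕ, d ∣ n → d < n → ∃ d', d' ∣ n ∧ d < d' ∧ (d' : ℝ) ≤ z * d := by
  classical
  set l := n.divisors.sort (· ≤ ·) with hl
  set R : ℕ → ℕ → Prop := fun a b => (b : ℝ) ≤ z * (a : ℝ) with hR
  have hmem : ∀ {d : ℕ}, d ∈ l ↔ d ∣ n := by
    intro d; rw [hl, Finset.mem_sort, Nat.mem_divisors]
    exact ⟨fun h => h.1, fun h => ⟨h, hn.ne'⟩⟩
  have hsort : l.SortedLT := Finset.sortedLT_sort _
  have hgetmono := hsort.strictMono_get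
  have hpos : ∀ {d : ℕ}, d ∈ l → 0 < d := fun hd => Nat.pos_of_dvd_of_pos (hmem.1 hd) hn
  have hratio : ∀ q ∈ l.zip l.tail, ((q.2 : ℝ) / (q.1 : ℝ) ≤ z ↔ R q.1 q.2) := by
    intro q hq
    have h1 : q.1 ∈ l := (List.of_mem_zip hq).1
    have : (0 : ℝ) < q.1 := by exact_mod_cast hpos h1
    rw [hR, div_le_iff₀ this]
  have key : Delta0 n ≤ z ↔ l.IsChain R := by
    rw [show Delta0 n = (l.zip l.tail).foldr (fun q r => max ((q.2 : ℝ) / (q.1 : ℝ)) r) 1 from rfl,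
      foldr_max_le_iff, ← zip_tail_chain' R l]
    constructor
    · rintro ⟨-, h⟩ q hq; exact (hratio q hq).1 (h q hq)
    · intro h; exact ⟨hz, fun q hq => (hratio q hq).2 (h q hq)⟩
  rw [key, List.isChain_iff_getElem]
  constructor
  · intro hchain d hd hdn
    obtain ⟨i, hi⟩ := List.mem_iff_get.1 (hmem.2 hd)
    obtain ⟨j, hj⟩ := List.mem_iff_get.1 (hmem.2 (dvd_refl n))
    have hij : i < j := by
      apply hgetmono.lt_iff_lt.1; rw [hi, hj]; exact hdn
    have hlt : (i : ℕ) < l.length - 1 := by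
      have := j.isLt; have := hij; omega
    have h2 : (i : ℕ) + 1 < l.length := by omega
    refine ⟨l.get ⟨(i : ℕ) + 1, h2⟩, hmem.1 (l.get_mem _), ?_, ?_⟩
    · rw [← hi]; exact hgetmono (by simp [Fin.lt_def])
    · rw [← hi]
      have := hchain i (by omega)
      rw [hR] at this
      exact this
  · intro h i hi
    have hilen : i < l.length := by omega
    have hi1len : i + 1 < l.length := by omega
    set a := l.get ⟨i, hilen⟩ with ha
    set b := l.get ⟨i + 1, hi1len⟩ with hb
    have hab : a < b := hgetmono (by simp [Fin.lt_def])
    have hBn : b ≤ n := Nat.le_of_dvd hn (hmem.1 (l.get_mem _))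
    have han : a < n := lt_of_lt_of_le hab hBn
    obtain ⟨d', hd'n, had', hd'z⟩ := h a (hmem.1 (l.get_mem _)) han
    obtain ⟨j, hj⟩ := List.mem_iff_get.1 (hmem.2 hd'n)
    have hij : (⟨i, hilen⟩ : Fin l.length) < j := by
      apply hgetmono.lt_iff_lt.1; rw [hj, ← ha]; exact had'
    have hbd : b ≤ d' := by
      rw [← hj, hb]
      apply hgetmono.monotone
      simp only [Fin.le_def]
      simp only [Fin.lt_def] at hij
      omega
    show R a b
    rw [hR]
    calc (b : ℝ) ≤ d' := by exact_mod_cast hbd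
      _ ≤ z * a := hd'z

def Pprod (k : ℕ) (p e : Fin k → ℕ) (i : ℕ) : ℕ :=
  ∏ j ∈ Finset.univ.filter (fun j : Fin k => (j : ℕ) < i), p j ^ e j

section NT

variable {k : ℕ} {p e : Fin k → ℕ} (hp : ∀ i, (p i).Prime) (he : ∀ i, 1 ≤ e i)
  (hmono : StrictMono p)

lemma Pprod_zero : Pprod k p e 0 = 1 := by
  simp [Pprod]

lemma Pprod_succ {i : ℕ} (h : i < k) :
    Pprod k p e (i + 1) = Pprod k p e i * p ⟨i, h⟩ ^ e ⟨i, h⟩ := by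
  classical
  have hset : Finset.univ.filter (fun j : Fin k => (j : ℕ) < i + 1) =
      insert ⟨i, h⟩ (Finset.univ.filter (fun j : Fin k => (j : ℕ) < i)) := by
    ext j
    simp only [Finset.mem_filter, Finset.mem_univ, true_and, Finset.mem_insert, Fin.ext_iff]
    omega
  rw [Pprod, hset, Finset.prod_insert (by simp), Pprod, mul_comm]

lemma Pprod_k : Pprod k p e k = ∏ i, p i ^ e i := by
  rw [Pprod]
  congr 1
  ext j
  simp [j.isLt]

include hp in
lemma Pprod_pos (i : ℕ) : 0 < Pprod k p e i := by
  apply Finset.prod_pos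
  intro j _
  exact pow_pos (hp j).pos _

lemma Pprod_dvd (i : ℕ) : Pprod k p e i ∣ ∏ j, p j ^ e j :=
  Finset.prod_dvd_prod_of_subset _ _ _ (Finset.filter_subset _ _)

include hp hmono in
lemma Pprod_not_dvd {i : ℕ} (h : i < k) : ¬ p ⟨i, h⟩ ∣ Pprod k p e i := by
  intro hdvd
  obtain ⟨j, hj, hdj⟩ := (Nat.Prime.prime (hp _)).exists_mem_finset_dvd hdvd
  simp only [Finset.mem_filter, Finset.mem_univ, true_and] at hj
  have heq : p ⟨i, h⟩ = p j :=
    (Nat.prime_dvd_prime_iff_eq (hp _) (hp _)).1 ((hp _).dvd_of_dvd_pow hdj)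
  have : p j < p ⟨i, h⟩ := hmono (by simp [Fin.lt_def]; omega)
  omega

include hp he hmono in
lemma lemA (z : ℝ) :
    ∀ i ≤ k, (∀ j : Fin k, (j : ℕ) < i → (p j : ℝ) ≤ z * Pprod k p e (j : ℕ)) →
    ∀ x : ℝ, 1 ≤ x → x ≤ z * Pprod k p e i →
    ∃ m : ℕ, m ∣ Pprod k p e i ∧ (m : ℝ) ≤ x ∧ x ≤ z * m := by
  intro i
  induction i with
  | zero =>
    intro _ _ x hx1 hx2
    exact ⟨1, by rw [Pprod_zero], by exact_mod_cast hx1, by simpa [Pprod_zero] using hx2⟩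
  | succ i ih =>
    intro hik hyp x hx1 hx2
    have hik' : i < k := hik
    set pi := p ⟨i, hik'⟩ with hpi
    set ei := e ⟨i, hik'⟩ with hei
    have hpi2 : 2 ≤ pi := (hp _).two_le
    have hx0 : (0 : ℝ) ≤ x := le_trans zero_le_one hx1
    have hfl : 1 ≤ ⌊x⌋₊ := Nat.le_floor (by exact_mod_cast hx1)
    set L := Nat.log pi ⌊x⌋₊ with hL
    set a := min ei L with ha
    have haei : a ≤ ei := min_le_left _ _
    have h1 : pi ^ a ≤ ⌊x⌋₊ :=
      le_trans (Nat.pow_le_pow_right (by omega) (min_le_right _ _))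
        (Nat.pow_log_le_self pi (by omega))
    have hxa : ((pi ^ a : ℕ) : ℝ) ≤ x :=
      le_trans (by exact_mod_cast h1) (Nat.floor_le hx0)
    have hpa_pos : (0 : ℝ) < ((pi ^ a : ℕ) : ℝ) := by
      have : 0 < pi ^ a := pow_pos (by omega) _
      exact_mod_cast this
    set y := x / ((pi ^ a : ℕ) : ℝ) with hy
    have hy1 : 1 ≤ y := (one_le_div hpa_pos).2 hxa
    have hyx : x = y * ((pi ^ a : ℕ) : ℝ) := by
      rw [hy, div_mul_cancel₀]; exact hpa_pos.ne'
    have hPsucc := Pprod_succ (p := p) (e := e) hik'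
    have hy2 : y ≤ z * Pprod k p e i := by
      rcases eq_or_lt_of_le haei with heq | hlt
      · -- a = ei
        rw [hy, div_le_iff₀ hpa_pos]
        calc x ≤ z * Pprod k p e (i + 1) := hx2
          _ = z * Pprod k p e i * ((pi ^ a : ℕ) : ℝ) := by
              rw [hPsucc]; push_cast [heq]; ring
      · -- a < ei, so a = L
        have haL : a = L := by omega
        have hxlt : x < ((pi ^ (a + 1) : ℕ) : ℝ) := by
          have h2 : ⌊x⌋₊ < pi ^ (L + 1) := Nat.lt_pow_succ_log_self (by omega) _
          have h3 : x < (⌊x⌋₊ : ℝ) + 1 := Nat.lt_floor_add_one x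
          have h4 : (⌊x⌋₊ : ℝ) + 1 ≤ ((pi ^ (a + 1) : ℕ) : ℝ) := by
            rw [haL]; exact_mod_cast h2
          linarith
        have hylt : y < (pi : ℝ) := by
          rw [hy, div_lt_iff₀ hpa_pos]
          calc x < ((pi ^ (a + 1) : ℕ) : ℝ) := hxlt
            _ = (pi : ℝ) * ((pi ^ a : ℕ) : ℝ) := by push_cast; ring
        have hpizP : (pi : ℝ) ≤ z * Pprod k p e i :=
          hyp ⟨i, hik'⟩ (by simp)
        linarith
    obtain ⟨m', hm'd, hm'1, hm'2⟩ := ih (le_of_lt hik')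
      (fun j hj => hyp j (by omega)) y hy1 hy2
    refine ⟨m' * pi ^ a, ?_, ?_, ?_⟩
    · rw [hPsucc]
      exact mul_dvd_mul hm'd (pow_dvd_pow _ haei)
    · rw [hyx]; push_cast
      exact mul_le_mul_of_nonneg_right hm'1 (by positivity)
    · rw [hyx]; push_cast
      calc y * (pi : ℝ) ^ a ≤ (z * m') * (pi : ℝ) ^ a :=
            mul_le_mul_of_nonneg_right hm'2 (by positivity)
        _ = z * ((m' : ℝ) * (pi : ℝ) ^ a) := by ring

include hp he hmono in
lemma lemB (z : ℝ) (hz : 1 ≤ z) :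
    ∀ i ≤ k, (∀ j : Fin k, (j : ℕ) < i → (p j : ℝ) ≤ z * Pprod k p e (j : ℕ)) →
    ∀ d : ℕ, d ∣ Pprod k p e i → d < Pprod k p e i →
    ∃ d', d' ∣ Pprod k p e i ∧ d < d' ∧ (d' : ℝ) ≤ z * d := by
  intro i
  induction i with
  | zero =>
    intro _ _ d hd hdlt
    rw [Pprod_zero] at hdlt hd
    interval_cases d
    · simp at hd
  | succ i ih =>
    intro hik hyp d hd hdlt
    have hik' : i < k := hik
    set pi := p ⟨i, hik'⟩ with hpi
    set ei := e ⟨i, hik'⟩ with hei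
    have hpi2 : 2 ≤ pi := (hp _).two_le
    have hPsucc := Pprod_succ (p := p) (e := e) hik'
    have hPpos : 0 < Pprod k p e i := Pprod_pos hp i
    rw [hPsucc] at hd hdlt
    obtain ⟨m, w, hm, hw, hdmw⟩ := exists_dvd_and_dvd_of_dvd_mul hd
    obtain ⟨a, haei, rfl⟩ := (Nat.dvd_prime_pow (hp _)).1 hw
    have hpa_pos : 0 < pi ^ a := pow_pos (by omega) _
    rcases lt_or_eq_of_le (Nat.le_of_dvd hPpos hm) with hmlt | hmeq
    · obtain ⟨m', hm'd, hm'lt, hm'z⟩ := ih (le_of_lt hik')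
        (fun j hj => hyp j (by omega)) m hm hmlt
      refine ⟨m' * pi ^ a, ?_, ?_, ?_⟩
      · rw [hPsucc]; exact mul_dvd_mul hm'd (pow_dvd_pow _ haei)
      · rw [hdmw]; exact (Nat.mul_lt_mul_right hpa_pos).2 hm'lt
      · rw [hdmw]; push_cast
        calc (m' : ℝ) * (pi : ℝ) ^ a ≤ (z * m) * (pi : ℝ) ^ a :=
              mul_le_mul_of_nonneg_right hm'z (by positivity)
          _ = z * ((m : ℝ) * (pi : ℝ) ^ a) := by ring
    · -- m = Pprod i
      have haei' : a < ei := by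
        rcases lt_or_eq_of_le haei with h | h
        · exact h
        · exfalso; rw [hdmw, hmeq, h] at hdlt; omega
      have hpizP : (pi : ℝ) ≤ z * Pprod k p e i := hyp ⟨i, hik'⟩ (by simp)
      have hpiR : (0 : ℝ) < (pi : ℝ) := by exact_mod_cast (by omega : 0 < pi)
      have hPposR : (0 : ℝ) < (Pprod k p e i : ℝ) := by exact_mod_cast hPpos
      have hz0 : (0 : ℝ) < z := lt_of_lt_of_le zero_lt_one hz
      set x := z * (Pprod k p e i : ℝ) / (pi : ℝ) with hx
      have hx1 : 1 ≤ x := (one_le_div hpiR).2 hpizP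
      have hx2 : x ≤ z * Pprod k p e i := by
        rw [hx]
        apply div_le_self (by positivity)
        exact_mod_cast (by omega : 1 ≤ pi)
      obtain ⟨m'', hm''d, hm''1, hm''2⟩ := lemA hp he hmono z i (le_of_lt hik')
        (fun j hj => hyp j (by omega)) x hx1 hx2
      have hxval : x * (pi : ℝ) ^ (a + 1) = z * ((Pprod k p e i : ℝ) * (pi : ℝ) ^ a) := by
        rw [hx]; field_simp; ring
      refine ⟨m'' * pi ^ (a + 1), ?_, ?_, ?_⟩
      · rw [hPsucc]; exact mul_dvd_mul hm''d (pow_dvd_pow _ haei')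
      · -- d < d'
        have hled : (d : ℝ) ≤ (m'' * pi ^ (a + 1) : ℕ) := by
          have h5 : x * (pi : ℝ) ^ (a + 1) ≤ (z * m'') * (pi : ℝ) ^ (a + 1) :=
            mul_le_mul_of_nonneg_right hm''2 (by positivity)
          rw [hxval] at h5
          have h6 : (d : ℝ) = (Pprod k p e i : ℝ) * (pi : ℝ) ^ a := by
            rw [hdmw, hmeq]; push_cast; ring
          have h7 : ((m'' * pi ^ (a + 1) : ℕ) : ℝ) = (m'' : ℝ) * (pi : ℝ) ^ (a + 1) := by
            push_cast; ring
          rw [h6, h7]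
          nlinarith
        have hledn : d ≤ m'' * pi ^ (a + 1) := by exact_mod_cast hled
        rcases lt_or_eq_of_le hledn with h | h
        · exact h
        · exfalso
          rw [hdmw, hmeq] at h
          have : Pprod k p e i = m'' * pi := by
            have h8 : Pprod k p e i * pi ^ a = (m'' * pi) * pi ^ a := by
              rw [h]; ring
            exact Nat.eq_of_mul_eq_mul_right hpa_pos h8
          exact Pprod_not_dvd hp hmono hik' ⟨m'', by rw [this]; ring⟩
      · -- d' ≤ z * d
        have h5 : ((m'' * pi ^ (a + 1) : ℕ) : ℝ) ≤ x * (pi : ℝ) ^ (a + 1) := by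
          push_cast
          exact mul_le_mul_of_nonneg_right hm''1 (by positivity)
        rw [hxval] at h5
        have h6 : (d : ℝ) = (Pprod k p e i : ℝ) * (pi : ℝ) ^ a := by
          rw [hdmw, hmeq]; push_cast; ring
        rw [h6]
        exact h5

end NT
/-- Let `n = p_1^{e_1} ⋯ p_k^{e_k}` with primes `p_1 < ⋯ < p_k` and `e_i ≥ 1`,
and let `z ≥ 1`. Then `Δ₀(n) ≤ z` iff `p_i ≤ z · ∏_{j < i} p_j^{e_j}` for all `i`. -/
theorem delta0_le_iff_structure (n : ℕ) (hn : 1 < n) (z : ℝ) (hz : 1 ≤ z)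
    (k : ℕ) (p e : Fin k → ℕ) (hp : ∀ i, (p i).Prime) (he : ∀ i, 1 ≤ e i)
    (hmono : StrictMono p) (hfac : n = ∏ i, p i ^ e i) :
    Delta0 n ≤ z ↔
      ∀ i : Fin k, (p i : ℝ) ≤ z * ∏ j ∈ Finset.Iio i, (p j : ℝ) ^ (e j) := by
  classical
  have hn0 : 0 < n := by omega
  have hcast : ∀ i : Fin k,
      ((Pprod k p e (i : ℕ) : ℕ) : ℝ) = ∏ j ∈ Finset.Iio i, (p j : ℝ) ^ (e j) := by
    intro i
    rw [Pprod]
    push_cast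
    refine Finset.prod_congr ?_ (fun _ _ => rfl)
    ext j
    simp only [Finset.mem_filter, Finset.mem_univ, true_and, Finset.mem_Iio, Fin.lt_def]
  rw [delta0_le_iff_dense n hn0 z hz]
  constructor
  · intro hdense i
    set d := Pprod k p e (i : ℕ) with hdP
    have hdpos : 0 < d := Pprod_pos hp _
    have hddvd : d ∣ n := by rw [hfac]; exact Pprod_dvd _
    set Q := ∏ j ∈ Finset.univ.filter (fun j : Fin k => ¬ (j : ℕ) < (i : ℕ)), p j ^ e j
      with hQdef
    have hsplit : d * Q = n := by
      rw [hdP, Pprod, hQdef, Finset.prod_filter_mul_prod_filter_not, hfac]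
    have hQ2 : 2 ≤ Q := by
      have h1 : p i ^ e i ≤ Q := by
        apply Finset.single_le_prod' (fun j _ => Nat.one_le_iff_ne_zero.2
          (pow_ne_zero _ (hp j).pos.ne'))
        exact Finset.mem_filter.2 ⟨Finset.mem_univ _, lt_irrefl _⟩
      have h2 : 2 ≤ p i ^ e i :=
        le_trans (hp i).two_le (Nat.le_self_pow (by have := he i; omega) _)
      omega
    have hdlt : d < n := by
      rw [← hsplit]
      calc d = d * 1 := (mul_one d).symm
        _ < d * Q := (Nat.mul_lt_mul_left hdpos).2 (by omega)
    obtain ⟨d', hd'dvd, hdd', hd'z⟩ := hdense d hddvd hdlt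
    have hd'pos : 0 < d' := by omega
    have hex : ∃ j : Fin k, i ≤ j ∧ p j ∣ d' := by
      by_contra hcon
      push_neg at hcon
      have hcop : Nat.Coprime d' Q := by
        by_contra hnc
        obtain ⟨q, hqp, hqd', hqQ⟩ := Nat.Prime.not_coprime_iff_dvd.1 hnc
        obtain ⟨j, hjmem, hjdvd⟩ := (Nat.Prime.prime hqp).exists_mem_finset_dvd hqQ
        simp only [Finset.mem_filter, Finset.mem_univ, true_and, not_lt] at hjmem
        have hqj : q = p j :=
          (Nat.prime_dvd_prime_iff_eq hqp (hp j)).1 (hqp.dvd_of_dvd_pow hjdvd)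
        exact hcon j (by rwa [Fin.le_def]) (hqj ▸ hqd')
      have : d' ∣ d := hcop.dvd_of_dvd_mul_right (by rw [hsplit]; exact hd'dvd)
      have := Nat.le_of_dvd hdpos this
      omega
    obtain ⟨j, hij, hjdvd⟩ := hex
    have h1 : p i ≤ p j := hmono.monotone hij
    have h2 : p j ≤ d' := Nat.le_of_dvd hd'pos hjdvd
    calc (p i : ℝ) ≤ (d' : ℝ) := by exact_mod_cast le_trans h1 h2
      _ ≤ z * d := hd'z
      _ = z * ∏ j ∈ Finset.Iio i, (p j : ℝ) ^ (e j) := by rw [← hcast i]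
  · intro hyp d hd hdn
    have hyp' : ∀ j : Fin k, (j : ℕ) < k → (p j : ℝ) ≤ z * Pprod k p e (j : ℕ) := by
      intro j _
      rw [hcast j]
      exact hyp j
    have hPk : Pprod k p e k = n := by rw [Pprod_k, ← hfac]
    have := lemB hp he hmono z hz k le_rfl hyp' d (by rwa [hPk]) (by rwa [hPk])
    rwa [hPk] at this
end

section
/- For every real constant α < 1, the series ∑_{n ∈ E, n ≥ 2} (log n)^α / n converges, where E = {n ≥ 2 : τ(n) ≥ (log n)^3}. -/
open Real

lemma bertrand_summable {p : ℝ} (hp : 1 < p) :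
    Summable (fun n : ℕ => ((n : ℝ) * Real.log n ^ p)⁻¹) := by
  have hp0 : (0:ℝ) < p := lt_trans one_pos hp
  rw [← summable_nat_add_iff 2]
  have hnn : ∀ n : ℕ, 0 ≤ (((n+2 : ℕ) : ℝ) * Real.log (n+2 : ℕ) ^ p)⁻¹ := by
    intro n; positivity
  rw [← summable_condensed_iff_of_nonneg hnn ?mono]
  case mono =>
    intro m n hm hmn
    have hlog : (0:ℝ) < Real.log ((m+2 : ℕ) : ℝ) := by
      apply Real.log_pos; exact_mod_cast Nat.lt_of_lt_of_le one_lt_two (by omega)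
    gcongr
  -- Summable fun k => 2^k * ((2^k+2) * log(2^k+2)^p)⁻¹
  rw [← summable_nat_add_iff 1]
  have hM : Summable (fun k : ℕ => ((Real.log 2 ^ p)⁻¹) * (((k+1 : ℕ) : ℝ) ^ p)⁻¹) := by
    exact ((summable_nat_add_iff 1).mpr (Real.summable_nat_rpow_inv.mpr hp)).mul_left _
  apply Summable.of_nonneg_of_le (fun k => by positivity) _ hM
  intro k
  set K : ℕ := 2 ^ (k+1) + 2 with hK
  have hKpos : (0:ℝ) < (K : ℝ) := by positivity
  have h1 : ((k+1:ℕ):ℝ) * Real.log 2 ≤ Real.log (K : ℝ) := by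
    calc ((k+1:ℕ):ℝ) * Real.log 2 = Real.log ((2:ℝ) ^ (k+1)) := by
          rw [Real.log_pow]
    _ ≤ Real.log (K : ℝ) := by
          apply Real.log_le_log (by positivity)
          rw [hK]; push_cast; linarith
  have hlog2 : (0:ℝ) < Real.log 2 := Real.log_pos one_lt_two
  have hlogKpos : (0:ℝ) < Real.log (K:ℝ) := lt_of_lt_of_le (by positivity) h1
  have h2 : (((k+1:ℕ):ℝ) ^ p) * (Real.log 2 ^ p) ≤ Real.log (K:ℝ) ^ p := by
    rw [← Real.mul_rpow (by positivity) hlog2.le]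
    exact Real.rpow_le_rpow (by positivity) h1 hp0.le
  calc (2:ℝ) ^ (k+1) * (((K:ℕ):ℝ) * Real.log (K:ℕ) ^ p)⁻¹
      ≤ (K:ℝ) * (((K:ℕ):ℝ) * Real.log (K:ℕ) ^ p)⁻¹ := by
        gcongr
        rw [hK]; push_cast; linarith
    _ = (Real.log (K:ℝ) ^ p)⁻¹ := by
        rw [mul_inv, ← mul_assoc, mul_inv_cancel₀ hKpos.ne', one_mul]
    _ ≤ ((((k+1:ℕ):ℝ) ^ p) * (Real.log 2 ^ p))⁻¹ := by
        apply inv_anti₀ (by positivity) h2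
    _ = (Real.log 2 ^ p)⁻¹ * (((k+1 : ℕ) : ℝ) ^ p)⁻¹ := by
        rw [mul_inv, mul_comm]

lemma v_summable {p : ℝ} (hp : 1 < p) :
    Summable (fun k : ℕ => if k = 1 then (Real.log 2 ^ p)⁻¹
      else ((k : ℝ) * Real.log k ^ p)⁻¹) := by
  have hmaj : Summable (fun k : ℕ => ((k : ℝ) * Real.log k ^ p)⁻¹
      + if k = 1 then (Real.log 2 ^ p)⁻¹ else 0) :=
    (bertrand_summable hp).add (summable_of_ne_finset_zero (s := {1})
      (fun k hk => if_neg (by simpa using hk)))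
  refine Summable.of_nonneg_of_le (fun k => by positivity) (fun k => ?_) hmaj
  by_cases hk : k = 1
  · subst hk
    simp only [if_pos rfl, Nat.cast_one, Real.log_one,
      Real.zero_rpow (by positivity : p ≠ 0), mul_zero, inv_zero, zero_add, le_refl]
  · simp only [if_neg hk, add_zero, le_refl]

noncomputable def vv (p : ℝ) (k : ℕ) : ℝ :=
  if k = 1 then (Real.log 2 ^ p)⁻¹ else ((k : ℝ) * Real.log k ^ p)⁻¹

lemma vv_nonneg (p : ℝ) (k : ℕ) : 0 ≤ vv p k := by
  unfold vv; split <;> positivity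

lemma vv_one (p : ℝ) : vv p 1 = (Real.log 2 ^ p)⁻¹ := if_pos rfl

lemma vv_of_two_le (p : ℝ) {k : ℕ} (hk : 2 ≤ k) :
    vv p k = ((k : ℝ) * Real.log k ^ p)⁻¹ := if_neg (by omega)

lemma log_facts {k : ℕ} (hk : 2 ≤ k) :
    (0:ℝ) < Real.log k ∧ Real.log 2 ≤ Real.log k :=
  ⟨Real.log_pos (by exact_mod_cast hk.trans_lt' one_lt_two),
   Real.log_le_log two_pos (by exact_mod_cast hk)⟩

lemma pair_bound {p : ℝ} (hp : 1 < p) (d m : ℕ) :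
    (((d * m : ℕ) : ℝ) * Real.log ((d * m : ℕ) : ℝ) ^ (2 * p))⁻¹ ≤ vv p d * vv p m := by
  have hp0 : (0:ℝ) < p := lt_trans one_pos hp
  have hlog2 : (0:ℝ) < Real.log 2 := Real.log_pos one_lt_two
  have hvv : ∀ a b : ℕ, (0:ℝ) ≤ vv p a * vv p b :=
    fun a b => mul_nonneg (vv_nonneg p a) (vv_nonneg p b)
  -- the case d = 1 (and its symmetric counterpart), as a helper
  have hone : ∀ k : ℕ, 2 ≤ k →
      (((k : ℕ) : ℝ) * Real.log ((k : ℕ) : ℝ) ^ (2 * p))⁻¹ ≤ vv p 1 * vv p k := by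
    intro k hk
    obtain ⟨hlogk, hlog2k⟩ := log_facts hk
    have hkpos : (0:ℝ) < (k:ℝ) := by positivity
    rw [vv_one, vv_of_two_le p hk, ← mul_inv]
    apply inv_anti₀ (by positivity)
    calc Real.log 2 ^ p * ((k:ℝ) * Real.log k ^ p)
        ≤ Real.log k ^ p * ((k:ℝ) * Real.log k ^ p) := by
          gcongr
      _ = (k:ℝ) * Real.log k ^ (2 * p) := by
          rw [two_mul, Real.rpow_add hlogk]; ring
  rcases Nat.eq_zero_or_pos d with rfl | hd0
  · simpa using hvv 0 m
  rcases Nat.eq_zero_or_pos m with rfl | hm0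
  · simpa using hvv d 0
  rcases eq_or_ne d 1 with rfl | hd1
  · rcases eq_or_ne m 1 with rfl | hm1
    · -- d = m = 1
      norm_num
      rw [Real.zero_rpow (by positivity : 2 * p ≠ 0)]
      simpa using hvv 1 1
    · rw [one_mul]
      exact hone m (by omega)
  · have hd2 : 2 ≤ d := by omega
    rcases eq_or_ne m 1 with rfl | hm1
    · rw [mul_one, mul_comm (vv p d)]
      exact hone d hd2
    · have hm2 : 2 ≤ m := by omega
      -- both ≥ 2
      obtain ⟨hld, hl2d⟩ := log_facts hd2
      obtain ⟨hlm, hl2m⟩ := log_facts hm2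
      have hdpos : (0:ℝ) < (d:ℝ) := by positivity
      have hmpos : (0:ℝ) < (m:ℝ) := by positivity
      have hlogdm : Real.log ((d * m : ℕ) : ℝ) = Real.log d + Real.log m := by
        push_cast
        exact Real.log_mul hdpos.ne' hmpos.ne'
      rw [vv_of_two_le p hd2, vv_of_two_le p hm2, ← mul_inv]
      apply inv_anti₀ (by positivity)
      rw [hlogdm]
      have hab : Real.log d * Real.log m ≤ (Real.log d + Real.log m) ^ 2 := by nlinarith
      calc (d:ℝ) * Real.log d ^ p * ((m:ℝ) * Real.log m ^ p)
          = ((d:ℝ) * m) * (Real.log d * Real.log m) ^ p := by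
            rw [Real.mul_rpow hld.le hlm.le]; ring
        _ ≤ ((d:ℝ) * m) * ((Real.log d + Real.log m) ^ 2) ^ p := by
            gcongr
        _ = ((d * m : ℕ) : ℝ) * (Real.log d + Real.log m) ^ (2 * p) := by
            push_cast
            rw [← Real.rpow_natCast (Real.log d + Real.log m) 2,
              ← Real.rpow_mul (by positivity), Nat.cast_ofNat]

lemma vv_summable {p : ℝ} (hp : 1 < p) : Summable (vv p) := v_summable hp

lemma card_divisorsAntidiagonal (n : ℕ) :
    (Nat.divisorsAntidiagonal n).card = n.divisors.card := by
  rw [← Nat.image_fst_divisorsAntidiagonal]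
  refine (Finset.card_image_of_injOn ?_).symm
  intro x hx y hy hxy
  rw [Finset.mem_coe, Nat.mem_divisorsAntidiagonal] at hx hy
  have hx1 : x.1 ≠ 0 := by rintro h; rw [h, zero_mul] at hx; exact hx.2 hx.1.symm
  have : x.2 = y.2 := by
    apply Nat.eq_of_mul_eq_mul_left (Nat.pos_of_ne_zero hx1)
    rw [hx.1, hxy, hy.1]
  exact Prod.ext hxy this

lemma tau_summable {p : ℝ} (hp : 1 < p) :
    Summable (fun n : ℕ =>
      (n.divisors.card : ℝ) * ((n : ℝ) * Real.log n ^ (2 * p))⁻¹) := by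
  have hW : Summable (fun q : ℕ × ℕ =>
      (((q.1 * q.2 : ℕ) : ℝ) * Real.log ((q.1 * q.2 : ℕ) : ℝ) ^ (2 * p))⁻¹) := by
    have hmaj : Summable (fun q : ℕ × ℕ => vv p q.1 * vv p q.2) :=
      (vv_summable hp).mul_of_nonneg (vv_summable hp) (vv_nonneg p) (vv_nonneg p)
    refine Summable.of_nonneg_of_le (fun q => by positivity)
      (fun q => pair_bound hp q.1 q.2) hmaj
  have hfib := (hW.hasSum.tsum_fiberwise (fun q => q.1 * q.2)).summable
  apply hfib.congr
  intro n
  rcases eq_or_ne n 0 with rfl | hn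
  · have : ∀ q : (fun q : ℕ × ℕ => q.1 * q.2) ⁻¹' {0},
        (((q.val.1 * q.val.2 : ℕ) : ℝ) * Real.log ((q.val.1 * q.val.2 : ℕ) : ℝ) ^ (2 * p))⁻¹ = 0 := by
      rintro ⟨q, hq⟩
      simp only [Set.mem_preimage, Set.mem_singleton_iff] at hq
      simp [hq]
    rw [tsum_congr this, tsum_zero]
    simp
  · rw [show (fun q : ℕ × ℕ => q.1 * q.2) ⁻¹' {n} = ↑(Nat.divisorsAntidiagonal n) by
        ext q; simp [hn],
      Finset.tsum_subtype' (Nat.divisorsAntidiagonal n)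
        (fun q => (((q.1 * q.2 : ℕ) : ℝ) * Real.log ((q.1 * q.2 : ℕ) : ℝ) ^ (2 * p))⁻¹)]
    calc ∑ q ∈ Nat.divisorsAntidiagonal n,
        (((q.1 * q.2 : ℕ) : ℝ) * Real.log ((q.1 * q.2 : ℕ) : ℝ) ^ (2 * p))⁻¹
        = ∑ _q ∈ Nat.divisorsAntidiagonal n, ((n : ℝ) * Real.log n ^ (2 * p))⁻¹ :=
          Finset.sum_congr rfl (fun q hq => by
            rw [(Nat.mem_divisorsAntidiagonal.mp hq).1])
      _ = (n.divisors.card : ℝ) * ((n : ℝ) * Real.log n ^ (2 * p))⁻¹ := by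
          rw [Finset.sum_const, card_divisorsAntidiagonal, nsmul_eq_mul]

/-- For every real `α < 1`, the series `∑_{n ∈ E} (log n)^α / n` converges, where
`E = {n ≥ 2 : τ(n) ≥ (log n)^3}`. -/
theorem summable_over_large_divisor_function (α : ℝ) (hα : α < 1) :
    Summable (fun n : {m : ℕ // 2 ≤ m ∧ (Real.log m) ^ 3 ≤ (m.divisors.card : ℝ)} =>
      Real.log (n : ℕ) ^ α / ((n : ℕ) : ℝ)) := by
  set p : ℝ := (3 - α) / 2 with hpdef
  have hp : 1 < p := by rw [hpdef]; linarith
  have h2p : 2 * p = 3 - α := by rw [hpdef]; ring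
  have hτ : Summable (fun n : ℕ =>
      (n.divisors.card : ℝ) * ((n : ℝ) * Real.log n ^ (3 - α))⁻¹) := by
    rw [← h2p]; exact tau_summable hp
  have hres := hτ.comp_injective
    (Subtype.val_injective : Function.Injective
      (Subtype.val : {m : ℕ // 2 ≤ m ∧ (Real.log m) ^ 3 ≤ (m.divisors.card : ℝ)} → ℕ))
  refine Summable.of_nonneg_of_le (fun n => ?_) (fun n => ?_) hres
  · have h1 : (1:ℝ) ≤ ((n : ℕ) : ℝ) := by exact_mod_cast Nat.one_le_of_lt n.2.1
    exact div_nonneg (Real.rpow_nonneg (Real.log_nonneg h1) α) (by positivity)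
  · obtain ⟨m, hm2, hτm⟩ := n
    simp only [Function.comp_apply]
    have hL : (0:ℝ) < Real.log m :=
      Real.log_pos (by exact_mod_cast hm2.trans_lt' one_lt_two)
    have hmpos : (0:ℝ) < (m:ℝ) := by positivity
    have key : (Real.log m) ^ (3:ℕ) * (((m:ℝ)) * Real.log m ^ (3 - α))⁻¹
        = Real.log m ^ α / (m:ℝ) := by
      have hLne : Real.log m ^ (3 - α) ≠ 0 := (Real.rpow_pos_of_pos hL _).ne'
      rw [← Real.rpow_natCast (Real.log m) 3]
      rw [show ((3:ℕ):ℝ) = α + (3 - α) by push_cast; ring, Real.rpow_add hL]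
      field_simp
    calc Real.log m ^ α / (m:ℝ)
        = (Real.log m) ^ (3:ℕ) * (((m:ℝ)) * Real.log m ^ (3 - α))⁻¹ := key.symm
      _ ≤ (m.divisors.card : ℝ) * (((m:ℝ)) * Real.log m ^ (3 - α))⁻¹ := by
          gcongr
end
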